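/- Every maximal element f of H_0[ℓ1(A)]_+ is of the form f = g_φ for some continuous linear functional φ on ℓ∞(A), where g_φ(x*) = |φ(|x*|)|. -/

import Mathlib

open scoped ENNReal

set_option synthInstance.maxHeartbeats 1000000
set_option maxHeartbeats 1000000

noncomputable section

/-- Positive homogeneity for functions on `ℓ∞(A)` (the dual of `ℓ1(A)`). -/
def PosHomA {A : Type*} (f : lp (fun _ : A => ℝ) ⊤ → ℝ) : Prop :=
  ∀ (c : ℝ), 0 ≤ c → ∀ x, f (c • x) = c * f x

/-- `x_1*, …, x_n* ∈ ℓ∞(A)` with `sup_{a ∈ A} Σ |x_k*(a)| ≤ 1`. -/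
def AdmissibleA {A : Type*} (l : List (lp (fun _ : A => ℝ) ⊤)) : Prop :=
  ∀ a : A, (l.map (fun x => |x a|)).sum ≤ 1

/-- The norm `‖f‖_{FBL[ℓ1(A)]}` (possibly infinite). -/
def fblNormA {A : Type*} (f : lp (fun _ : A => ℝ) ⊤ → ℝ) : ℝ≥0∞ :=
  ⨆ l : {l : List (lp (fun _ : A => ℝ) ⊤) // AdmissibleA l},
    ENNReal.ofReal ((l.1.map (fun x => |f x|)).sum)

/-- `f` is a maximal element of `H_0[ℓ1(A)]_+`: it cannot be pointwise increased
without changing its FBL-norm. -/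
def MaximalA {A : Type*} (f : lp (fun _ : A => ℝ) ⊤ → ℝ) : Prop :=
  PosHomA f ∧ (∀ x, 0 ≤ f x) ∧ fblNormA f < ∞ ∧
    ∀ g : lp (fun _ : A => ℝ) ⊤ → ℝ, PosHomA g → (∀ x, 0 ≤ g x) → fblNormA g < ∞ →
      (∀ x, f x ≤ g x) → fblNormA g = fblNormA f → g = f

/-- pointwise absolute value on `ℓ∞(A)`. -/
def lpAbs {A : Type*} (x : lp (fun _ : A => ℝ) ⊤) : lp (fun _ : A => ℝ) ⊤ :=
  ⟨fun a => |x a|, by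
    have h := lp.memℓp x
    have h2 : Memℓp (fun a => |(x : _ → ℝ) a|) ⊤ := by
      rw [memℓp_infty_iff] at h ⊢
      simpa [Real.norm_eq_abs, abs_abs] using h
    exact h2⟩

namespace S13

variable {A : Type*}

abbrev EA (A : Type*) := lp (fun _ : A => ℝ) (⊤ : ℝ≥0∞)

lemma memA {g : A → ℝ} {C : ℝ} (h : ∀ a, |g a| ≤ C) : Memℓp g (⊤ : ℝ≥0∞) := by
  rw [memℓp_infty_iff]
  exact ⟨C, by rintro r ⟨a, rfl⟩; simpa [Real.norm_eq_abs] using h a⟩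

lemma apply_le_norm (x : EA A) (a : A) : |x a| ≤ ‖x‖ := by
  have h := lp.norm_apply_le_norm (E := fun _ : A => ℝ) ENNReal.top_ne_zero x a
  rwa [Real.norm_eq_abs] at h

lemma norm_le_of {x : EA A} {C : ℝ} (hC : 0 ≤ C) (h : ∀ a, |x a| ≤ C) : ‖x‖ ≤ C :=
  lp.norm_le_of_forall_le hC (fun a => by simpa [Real.norm_eq_abs] using h a)

lemma sum_map_mul_left' {α : Type*} (l : List α) (F : α → ℝ) (c : ℝ) :
    (l.map fun y => c * F y).sum = c * (l.map F).sum := by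
  induction l with
  | nil => simp
  | cons x l ih => simp [ih, mul_add]

lemma sum_map_nonneg {α : Type*} {l : List α} {F : α → ℝ} (h : ∀ y ∈ l, 0 ≤ F y) :
    0 ≤ (l.map F).sum :=
  List.sum_nonneg (by rintro x hx; rcases List.mem_map.1 hx with ⟨y, hy, rfl⟩; exact h y hy)

lemma sum_map_abs_of_nonneg {α : Type*} {l : List α} {F : α → ℝ} (h : ∀ y, 0 ≤ F y) :
    (l.map fun y => |F y|).sum = (l.map F).sum := by
  congr 1
  exact List.map_congr_left (fun y _ => abs_of_nonneg (h y))

lemma lpAbs_apply (x : EA A) (a : A) : (lpAbs x) a = |x a| := rfl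

section f

variable {f : EA A → ℝ}

/-- basic norm facts -/
lemma sum_le_toReal (hFin : fblNormA f < ∞) {l : List (EA A)} (hl : AdmissibleA l) :
    (l.map fun x => |f x|).sum ≤ (fblNormA f).toReal := by
  have h : ENNReal.ofReal ((l.map fun x => |f x|).sum) ≤ fblNormA f :=
    le_iSup (fun l : {l : List (EA A) // AdmissibleA l} =>
      ENNReal.ofReal ((l.1.map fun x => |f x|).sum)) ⟨l, hl⟩
  have h2 := ENNReal.toReal_mono hFin.ne h
  rwa [ENNReal.toReal_ofReal (sum_map_nonneg fun y _ => abs_nonneg _)] at h2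

lemma fblNorm_le_of {C : ℝ}
    (h : ∀ l : List (EA A), AdmissibleA l → (l.map fun x => |f x|).sum ≤ C) :
    fblNormA f ≤ ENNReal.ofReal C :=
  iSup_le fun l => ENNReal.ofReal_le_ofReal (h l.1 l.2)

lemma fblNorm_mono {g : EA A → ℝ} (h : ∀ x, |f x| ≤ |g x|) : fblNormA f ≤ fblNormA g := by
  apply iSup_le
  intro l
  refine le_trans (ENNReal.ofReal_le_ofReal ?_)
    (le_iSup (fun l : {l : List (EA A) // AdmissibleA l} =>
      ENNReal.ofReal ((l.1.map fun x => |g x|).sum)) l)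
  exact List.sum_le_sum (fun x _ => h x)

lemma f_zero (hPH : PosHomA f) : f 0 = 0 := by
  have := hPH 0 le_rfl 0
  simpa using this

lemma f_le_N (hPH : PosHomA f) (hFin : fblNormA f < ∞) {x : EA A} (hx : ‖x‖ ≤ 1) :
    f x ≤ (fblNormA f).toReal := by
  have hl : AdmissibleA [x] := by
    intro a
    simpa using le_trans (apply_le_norm x a) hx
  have := sum_le_toReal hFin hl
  simp only [List.map_cons, List.map_nil, List.sum_cons, List.sum_nil, add_zero] at this
  exact le_trans (le_abs_self _) this

lemma f_le_N_norm (hPH : PosHomA f) (hPos : ∀ x, 0 ≤ f x) (hFin : fblNormA f < ∞) (x : EA A) :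
    f x ≤ (fblNormA f).toReal * ‖x‖ := by
  rcases eq_or_ne x 0 with rfl | hx
  · simp [f_zero hPH]
  · have hn : 0 < ‖x‖ := norm_pos_iff.mpr hx
    have h1 : f (‖x‖ • (‖x‖⁻¹ • x)) = ‖x‖ * f (‖x‖⁻¹ • x) := hPH ‖x‖ hn.le _
    rw [smul_inv_smul₀ hn.ne'] at h1
    have h2 : f (‖x‖⁻¹ • x) ≤ (fblNormA f).toReal := by
      apply f_le_N hPH hFin
      rw [norm_smul]
      simp [abs_of_nonneg (inv_nonneg.mpr hn.le), inv_mul_le_one₀ hn]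
    calc f x = ‖x‖ * f (‖x‖⁻¹ • x) := h1
      _ ≤ ‖x‖ * (fblNormA f).toReal := by
          exact mul_le_mul_of_nonneg_left h2 hn.le
      _ = (fblNormA f).toReal * ‖x‖ := mul_comm _ _

/-- Stage 1 gadget -/
def S1 (f : EA A → ℝ) (x : EA A) : Set ℝ :=
  {s | ∃ l : List (EA A), (∀ a, (l.map fun y => |y a|).sum ≤ |x a|) ∧ s = (l.map f).sum}

def g1 (f : EA A → ℝ) (x : EA A) : ℝ := sSup (S1 f x)

lemma zero_mem_S1 (f : EA A → ℝ) (x : EA A) : (0:ℝ) ∈ S1 f x :=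
  ⟨[], by simp [abs_nonneg], by simp⟩

lemma self_mem_S1 (f : EA A → ℝ) (x : EA A) : f x ∈ S1 f x :=
  ⟨[x], by simp, by simp⟩

lemma S1_nonempty (f : EA A → ℝ) (x : EA A) : (S1 f x).Nonempty := ⟨0, zero_mem_S1 f x⟩

lemma scaled_list_sum {c : ℝ} (hc : 0 ≤ c) (l : List (EA A)) (a : A) :
    ((l.map fun y => c • y).map fun y => |y a|).sum = c * (l.map fun y => |y a|).sum := by
  rw [List.map_map]
  rw [show ((fun y : EA A => |y a|) ∘ fun y => c • y) = fun y : EA A => c * |y a| from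
    funext fun y => by
      simp only [Function.comp_apply, lp.coeFn_smul, Pi.smul_apply, smul_eq_mul, abs_mul,
        abs_of_nonneg hc]]
  exact sum_map_mul_left' ..

lemma scaled_list_f_sum (hPH : PosHomA f) {c : ℝ} (hc : 0 ≤ c) (l : List (EA A)) :
    ((l.map fun y => c • y).map f).sum = c * (l.map f).sum := by
  rw [List.map_map]
  rw [show (f ∘ fun y : EA A => c • y) = fun y : EA A => c * f y from
    funext fun y => hPH c hc y]
  exact sum_map_mul_left' ..

lemma S1_val_le (hPH : PosHomA f) (hPos : ∀ x, 0 ≤ f x) (hFin : fblNormA f < ∞)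
    {x : EA A} {s : ℝ} (hs : s ∈ S1 f x) :
    s ≤ max ‖x‖ 1 * (fblNormA f).toReal := by
  obtain ⟨l, hl, rfl⟩ := hs
  set M : ℝ := max ‖x‖ 1 with hM
  have hM1 : (1:ℝ) ≤ M := le_max_right _ _
  have hM0 : 0 < M := lt_of_lt_of_le one_pos hM1
  set l' : List (EA A) := l.map fun y => M⁻¹ • y with hl'
  have hadm : AdmissibleA l' := by
    intro a
    rw [hl', scaled_list_sum (inv_nonneg.mpr hM0.le)]
    have h1 : (l.map fun y => |y a|).sum ≤ M :=
      le_trans (hl a) (le_trans (apply_le_norm x a) (le_max_left _ _))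
    calc M⁻¹ * (l.map fun y => |y a|).sum ≤ M⁻¹ * M :=
          mul_le_mul_of_nonneg_left h1 (inv_nonneg.mpr hM0.le)
      _ = 1 := inv_mul_cancel₀ hM0.ne'
  have hsum : (l'.map f).sum ≤ (fblNormA f).toReal := by
    rw [← sum_map_abs_of_nonneg (fun y => hPos y)]
    exact sum_le_toReal hFin hadm
  rw [hl', scaled_list_f_sum hPH (inv_nonneg.mpr hM0.le)] at hsum
  calc (l.map f).sum = M * (M⁻¹ * (l.map f).sum) := by
        rw [← mul_assoc, mul_inv_cancel₀ hM0.ne', one_mul]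
    _ ≤ M * (fblNormA f).toReal := mul_le_mul_of_nonneg_left hsum hM0.le

lemma S1_bdd (hPH : PosHomA f) (hPos : ∀ x, 0 ≤ f x) (hFin : fblNormA f < ∞) (x : EA A) :
    BddAbove (S1 f x) :=
  ⟨max ‖x‖ 1 * (fblNormA f).toReal, fun _ hs => S1_val_le hPH hPos hFin hs⟩

lemma g1_nonneg (hPH : PosHomA f) (hPos : ∀ x, 0 ≤ f x) (hFin : fblNormA f < ∞) (x : EA A) :
    0 ≤ g1 f x :=
  le_csSup (S1_bdd hPH hPos hFin x) (zero_mem_S1 f x)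

lemma f_le_g1 (hPH : PosHomA f) (hPos : ∀ x, 0 ≤ f x) (hFin : fblNormA f < ∞) (x : EA A) :
    f x ≤ g1 f x :=
  le_csSup (S1_bdd hPH hPos hFin x) (self_mem_S1 f x)

lemma g1_smul_le (hPH : PosHomA f) (hPos : ∀ x, 0 ≤ f x) (hFin : fblNormA f < ∞)
    {c : ℝ} (hc : 0 < c) (x : EA A) : g1 f (c • x) ≤ c * g1 f x := by
  apply csSup_le (S1_nonempty f _)
  rintro s ⟨l, hl, rfl⟩
  set l' : List (EA A) := l.map fun y => c⁻¹ • y with hl'def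
  have hmem : (l'.map f).sum ∈ S1 f x := by
    refine ⟨l', fun a => ?_, rfl⟩
    rw [hl'def, scaled_list_sum (inv_nonneg.mpr hc.le)]
    have h1 : (l.map fun y => |y a|).sum ≤ c * |x a| := by
      have := hl a
      rwa [show |(c • x) a| = c * |x a| by
        simp [lp.coeFn_smul, Pi.smul_apply, abs_mul, abs_of_nonneg hc.le]] at this
    calc c⁻¹ * (l.map fun y => |y a|).sum ≤ c⁻¹ * (c * |x a|) :=
          mul_le_mul_of_nonneg_left h1 (inv_nonneg.mpr hc.le)
      _ = |x a| := by field_simp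
  have hle : (l'.map f).sum ≤ g1 f x := le_csSup (S1_bdd hPH hPos hFin x) hmem
  have heq : (l'.map f).sum = c⁻¹ * (l.map f).sum := by
    rw [hl'def, scaled_list_f_sum hPH (inv_nonneg.mpr hc.le)]
  calc (l.map f).sum = c * (c⁻¹ * (l.map f).sum) := by field_simp
    _ = c * (l'.map f).sum := by rw [heq]
    _ ≤ c * g1 f x := mul_le_mul_of_nonneg_left hle hc.le

lemma g1_posHom (hPH : PosHomA f) (hPos : ∀ x, 0 ≤ f x) (hFin : fblNormA f < ∞) :
    PosHomA (g1 f) := by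
  intro c hc x
  rcases hc.eq_or_lt with rfl | hc
  · rw [zero_smul, zero_mul]
    refine le_antisymm (csSup_le (S1_nonempty f _) ?_) (g1_nonneg hPH hPos hFin 0)
    rintro s ⟨l, hl, rfl⟩
    apply le_of_eq
    apply List.sum_eq_zero
    intro r hr
    rcases List.mem_map.1 hr with ⟨y, hy, rfl⟩
    have hy0 : y = 0 := by
      apply lp.ext
      funext a
      have h1 : |y a| ≤ (l.map fun y => |y a|).sum :=
        List.single_le_sum (fun r hr => by
          rcases List.mem_map.1 hr with ⟨z, _, rfl⟩; exact abs_nonneg _)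
          _ (List.mem_map_of_mem hy)
      have h2 : |(0 : EA A) a| = 0 := by simp [lp.coeFn_zero]
      have := le_trans h1 (hl a)
      rw [h2] at this
      have : |y a| = 0 := le_antisymm this (abs_nonneg _)
      simpa [abs_eq_zero, lp.coeFn_zero] using this
    rw [hy0]
    exact f_zero hPH
  · apply le_antisymm (g1_smul_le hPH hPos hFin hc x)
    have h2 := g1_smul_le hPH hPos hFin (inv_pos.mpr hc) (c • x)
    rw [inv_smul_smul₀ hc.ne'] at h2
    calc c * g1 f x ≤ c * (c⁻¹ * g1 f (c • x)) := mul_le_mul_of_nonneg_left h2 hc.le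
      _ = g1 f (c • x) := by field_simp

lemma g1_select (hPH : PosHomA f) (hPos : ∀ x, 0 ≤ f x) (hFin : fblNormA f < ∞)
    {ε : ℝ} (hε : 0 < ε) (l : List (EA A)) :
    ∃ L : List (EA A), (∀ a, (L.map fun y => |y a|).sum ≤ (l.map fun y => |y a|).sum) ∧
      (l.map (g1 f)).sum ≤ (L.map f).sum + l.length * ε := by
  induction l with
  | nil => exact ⟨[], fun a => le_rfl, by simp⟩
  | cons x l ih =>
      obtain ⟨L, hL1, hL2⟩ := ih
      have hlt : g1 f x - ε < sSup (S1 f x) := by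
        have : g1 f x - ε < g1 f x := sub_lt_self _ hε
        exact this
      obtain ⟨s, hs, hslt⟩ := exists_lt_of_lt_csSup (S1_nonempty f x) hlt
      obtain ⟨lx, hlx, rfl⟩ := hs
      refine ⟨lx ++ L, fun a => ?_, ?_⟩
      · rw [List.map_append, List.sum_append, List.map_cons, List.sum_cons]
        exact add_le_add (hlx a) (hL1 a)
      · rw [List.map_append, List.sum_append, List.map_cons, List.sum_cons,
          List.length_cons]
        push_cast
        have : g1 f x ≤ (lx.map f).sum + ε := by linarith
        linarith

lemma g1_norm_le (hPH : PosHomA f) (hPos : ∀ x, 0 ≤ f x) (hFin : fblNormA f < ∞) :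
    fblNormA (g1 f) ≤ fblNormA f := by
  conv_rhs => rw [← ENNReal.ofReal_toReal hFin.ne]
  apply fblNorm_le_of
  intro l hl
  rw [sum_map_abs_of_nonneg (g1_nonneg hPH hPos hFin)]
  apply le_of_forall_pos_le_add
  intro ε' hε'
  set ε : ℝ := ε' / (l.length + 1) with hεdef
  have hε : 0 < ε := by positivity
  obtain ⟨L, hL1, hL2⟩ := g1_select hPH hPos hFin hε l
  have hadm : AdmissibleA L := fun a => le_trans (hL1 a) (hl a)
  have hLf : (L.map f).sum ≤ (fblNormA f).toReal := by
    rw [← sum_map_abs_of_nonneg (fun y => hPos y)]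
    exact sum_le_toReal hFin hadm
  have key : ((l.length : ℝ) + 1) * ε = ε' := by
    rw [hεdef]; field_simp
  have hlen : (l.length : ℝ) * ε ≤ ε' := by nlinarith [hε.le]
  linarith

lemma g1_eq_f (hf : MaximalA f) : g1 f = f := by
  obtain ⟨hPH, hPos, hFin, hMax⟩ := hf
  have hle : fblNormA (g1 f) ≤ fblNormA f := g1_norm_le hPH hPos hFin
  have hge : fblNormA f ≤ fblNormA (g1 f) :=
    fblNorm_mono fun x => by
      rw [abs_of_nonneg (hPos x), abs_of_nonneg (g1_nonneg hPH hPos hFin x)]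
      exact f_le_g1 hPH hPos hFin x
  exact hMax (g1 f) (g1_posHom hPH hPos hFin) (g1_nonneg hPH hPos hFin)
    (lt_of_le_of_lt hle hFin) (f_le_g1 hPH hPos hFin) (le_antisymm hle hge)

lemma stage1 (hf : MaximalA f) (x : EA A) (l : List (EA A))
    (hl : ∀ a, (l.map fun y => |y a|).sum ≤ |x a|) : (l.map f).sum ≤ f x := by
  obtain ⟨hPH, hPos, hFin, -⟩ := id hf
  have h := le_csSup (S1_bdd hPH hPos hFin x) (show (l.map f).sum ∈ S1 f x from ⟨l, hl, rfl⟩)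
  rwa [show sSup (S1 f x) = f x from congrFun (g1_eq_f hf) x] at h

lemma f_le_f_abs (hf : MaximalA f) (x : EA A) : f x ≤ f (lpAbs x) := by
  have h := stage1 hf (lpAbs x) [x] (fun a => by
    simp [lpAbs_apply, abs_abs])
  simpa using h

lemma f_superadd (hf : MaximalA f) {z1 z2 : EA A}
    (h1 : ∀ a, 0 ≤ z1 a) (h2 : ∀ a, 0 ≤ z2 a) : f z1 + f z2 ≤ f (z1 + z2) := by
  have h := stage1 hf (z1 + z2) [z1, z2] (fun a => by
    have e : (z1 + z2) a = z1 a + z2 a := by simp [lp.coeFn_add]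
    simp only [List.map_cons, List.map_nil, List.sum_cons, List.sum_nil, add_zero, e]
    rw [abs_of_nonneg (h1 a), abs_of_nonneg (h2 a), abs_of_nonneg (add_nonneg (h1 a) (h2 a))])
  simpa using h

end f

/-! ### Stage 2 gadget -/

def S2 (ψ : EA A →L[ℝ] ℝ) (x : EA A) : Set ℝ :=
  {t | ∃ z : EA A, (∀ a, 0 ≤ z a ∧ z a ≤ |x a|) ∧ t = ψ z}

def G (ψ : EA A →L[ℝ] ℝ) (x : EA A) : ℝ := sSup (S2 ψ x)

def lpPos (x : EA A) : EA A :=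
  ⟨fun a => max (x a) 0, memA fun a => by
    rw [abs_of_nonneg (le_max_right _ _)]
    exact max_le (le_trans (le_abs_self _) (apply_le_norm x a)) (norm_nonneg x)⟩

def lpNeg (x : EA A) : EA A := lpPos (-x)

lemma lpPos_apply (x : EA A) (a : A) : (lpPos x) a = max (x a) 0 := rfl

lemma lpNeg_apply (x : EA A) (a : A) : (lpNeg x) a = max (-(x a)) 0 := by
  show max ((-x) a) 0 = max (-(x a)) 0
  simp [lp.coeFn_neg]

lemma lpPos_nonneg (x : EA A) (a : A) : 0 ≤ (lpPos x) a := le_max_right _ _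

lemma lpNeg_nonneg (x : EA A) (a : A) : 0 ≤ (lpNeg x) a := by
  rw [lpNeg_apply]; exact le_max_right _ _

lemma norm_lpPos_le (x : EA A) : ‖lpPos x‖ ≤ ‖x‖ := by
  apply norm_le_of (norm_nonneg x)
  intro a
  rw [lpPos_apply, abs_of_nonneg (le_max_right _ _)]
  exact max_le (le_trans (le_abs_self _) (apply_le_norm x a)) (norm_nonneg x)

lemma norm_lpNeg_le (x : EA A) : ‖lpNeg x‖ ≤ ‖x‖ := by
  have := norm_lpPos_le (-x)
  rwa [norm_neg] at this

section psi

variable (ψ : EA A →L[ℝ] ℝ) {N : ℝ}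

lemma zero_mem_S2 (x : EA A) : (0:ℝ) ∈ S2 ψ x :=
  ⟨0, fun a => by simp [lp.coeFn_zero, abs_nonneg], by simp⟩

lemma S2_nonempty (x : EA A) : (S2 ψ x).Nonempty := ⟨0, zero_mem_S2 ψ x⟩

lemma psi_le (hN : 0 ≤ N) (hbd : ∀ y : EA A, ‖y‖ ≤ 1 → ψ y ≤ N) (z : EA A) :
    ψ z ≤ N * ‖z‖ := by
  rcases eq_or_ne z 0 with rfl | hz
  · simp
  · have hn : 0 < ‖z‖ := norm_pos_iff.mpr hz
    have h1 : ψ (‖z‖⁻¹ • z) ≤ N := by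
      apply hbd
      rw [norm_smul]
      simp [abs_of_nonneg (inv_nonneg.mpr hn.le), inv_mul_le_one₀ hn]
    rw [map_smul, smul_eq_mul] at h1
    calc ψ z = ‖z‖ * (‖z‖⁻¹ * ψ z) := by field_simp
      _ ≤ ‖z‖ * N := mul_le_mul_of_nonneg_left h1 hn.le
      _ = N * ‖z‖ := mul_comm _ _

lemma S2_val_le (hN : 0 ≤ N) (hbd : ∀ y : EA A, ‖y‖ ≤ 1 → ψ y ≤ N) {x : EA A} {t : ℝ}
    (ht : t ∈ S2 ψ x) : t ≤ N * ‖x‖ := by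
  obtain ⟨z, hz, rfl⟩ := ht
  have hzn : ‖z‖ ≤ ‖x‖ := by
    apply norm_le_of (norm_nonneg x)
    intro a
    rw [abs_of_nonneg (hz a).1]
    exact le_trans (hz a).2 (apply_le_norm x a)
  exact le_trans (psi_le ψ hN hbd z)
    (mul_le_mul_of_nonneg_left hzn hN)

lemma S2_bdd (hN : 0 ≤ N) (hbd : ∀ y : EA A, ‖y‖ ≤ 1 → ψ y ≤ N) (x : EA A) :
    BddAbove (S2 ψ x) :=
  ⟨N * ‖x‖, fun _ ht => S2_val_le ψ hN hbd ht⟩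

lemma G_nonneg (hN : 0 ≤ N) (hbd : ∀ y : EA A, ‖y‖ ≤ 1 → ψ y ≤ N) (x : EA A) :
    0 ≤ G ψ x :=
  le_csSup (S2_bdd ψ hN hbd x) (zero_mem_S2 ψ x)

lemma G_le (hN : 0 ≤ N) (hbd : ∀ y : EA A, ‖y‖ ≤ 1 → ψ y ≤ N) (x : EA A) :
    G ψ x ≤ N * ‖x‖ :=
  csSup_le (S2_nonempty ψ x) (fun _ ht => S2_val_le ψ hN hbd ht)

lemma S2_congr {x y : EA A} (h : ∀ a, |x a| = |y a|) : S2 ψ x = S2 ψ y := by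
  ext t
  constructor <;> rintro ⟨z, hz, rfl⟩
  · exact ⟨z, fun a => ⟨(hz a).1, (h a) ▸ (hz a).2⟩, rfl⟩
  · exact ⟨z, fun a => ⟨(hz a).1, (h a).symm ▸ (hz a).2⟩, rfl⟩

lemma G_abs (x : EA A) : G ψ (lpAbs x) = G ψ x := by
  unfold G
  rw [S2_congr ψ (x := lpAbs x) (y := x) (fun a => by simp [lpAbs_apply, abs_abs])]

lemma G_zero : G ψ 0 = 0 := by
  have h : S2 ψ 0 = {0} := by
    ext t
    constructor
    · rintro ⟨z, hz, rfl⟩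
      have hz0 : z = 0 := by
        apply lp.ext
        funext a
        have h1 := (hz a).2
        have h2 : |(0 : EA A) a| = 0 := by simp [lp.coeFn_zero]
        rw [h2] at h1
        have := le_antisymm h1 (hz a).1
        simpa [lp.coeFn_zero] using this
      simp [hz0]
    · rintro rfl
      exact zero_mem_S2 ψ 0
  rw [G, h, csSup_singleton]

lemma G_smul_le (hN : 0 ≤ N) (hbd : ∀ y : EA A, ‖y‖ ≤ 1 → ψ y ≤ N)
    {c : ℝ} (hc : 0 < c) (x : EA A) : G ψ (c • x) ≤ c * G ψ x := by
  apply csSup_le (S2_nonempty ψ _)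
  rintro t ⟨z, hz, rfl⟩
  have hmem : ψ (c⁻¹ • z) ∈ S2 ψ x := by
    refine ⟨c⁻¹ • z, fun a => ?_, rfl⟩
    have e : (c⁻¹ • z) a = c⁻¹ * z a := by simp [lp.coeFn_smul]
    have e2 : |(c • x) a| = c * |x a| := by
      simp [lp.coeFn_smul, abs_mul, abs_of_nonneg hc.le]
    constructor
    · rw [e]; exact mul_nonneg (inv_nonneg.mpr hc.le) (hz a).1
    · rw [e]
      have := (hz a).2
      rw [e2] at this
      calc c⁻¹ * z a ≤ c⁻¹ * (c * |x a|) :=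
            mul_le_mul_of_nonneg_left this (inv_nonneg.mpr hc.le)
        _ = |x a| := by field_simp
  have hle : ψ (c⁻¹ • z) ≤ G ψ x := le_csSup (S2_bdd ψ hN hbd x) hmem
  rw [map_smul, smul_eq_mul] at hle
  calc ψ z = c * (c⁻¹ * ψ z) := by field_simp
    _ ≤ c * G ψ x := mul_le_mul_of_nonneg_left hle hc.le

lemma G_posHom (hN : 0 ≤ N) (hbd : ∀ y : EA A, ‖y‖ ≤ 1 → ψ y ≤ N) :
    PosHomA (G ψ) := by
  intro c hc x
  rcases hc.eq_or_lt with rfl | hc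
  · rw [zero_smul, zero_mul, G_zero]
  · apply le_antisymm (G_smul_le ψ hN hbd hc x)
    have h2 := G_smul_le ψ hN hbd (inv_pos.mpr hc) (c • x)
    rw [inv_smul_smul₀ hc.ne'] at h2
    calc c * G ψ x ≤ c * (c⁻¹ * G ψ (c • x)) := mul_le_mul_of_nonneg_left h2 hc.le
      _ = G ψ (c • x) := by field_simp

lemma G_add (hN : 0 ≤ N) (hbd : ∀ y : EA A, ‖y‖ ≤ 1 → ψ y ≤ N)
    {y1 y2 : EA A} (h1 : ∀ a, 0 ≤ y1 a) (h2 : ∀ a, 0 ≤ y2 a) :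
    G ψ (y1 + y2) = G ψ y1 + G ψ y2 := by
  have habs1 : ∀ a, |y1 a| = y1 a := fun a => abs_of_nonneg (h1 a)
  have habs2 : ∀ a, |y2 a| = y2 a := fun a => abs_of_nonneg (h2 a)
  have hadd : ∀ a, (y1 + y2) a = y1 a + y2 a := fun a => by simp [lp.coeFn_add]
  have habs12 : ∀ a, |(y1 + y2) a| = y1 a + y2 a := fun a => by
    rw [hadd a]; exact abs_of_nonneg (add_nonneg (h1 a) (h2 a))
  apply le_antisymm
  · -- Riesz decomposition
    apply csSup_le (S2_nonempty ψ _)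
    rintro t ⟨z, hz, rfl⟩
    set z1 : EA A := ⟨fun a => min (z a) (y1 a), memA (C := ‖z‖) fun a => by
      rw [abs_of_nonneg (le_min (hz a).1 (h1 a))]
      exact le_trans (min_le_left _ _) (le_trans (le_abs_self _) (apply_le_norm z a))⟩
      with hz1def
    have hz1app : ∀ a, z1 a = min (z a) (y1 a) := fun a => rfl
    set z2 : EA A := z - z1 with hz2def
    have hz2app : ∀ a, z2 a = z a - min (z a) (y1 a) := fun a => by
      rw [hz2def]
      show (z - z1) a = _
      simp [lp.coeFn_sub, hz1app]
    have hzz : z = z1 + z2 := by rw [hz2def]; abel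
    have hm1 : ψ z1 ∈ S2 ψ y1 := by
      refine ⟨z1, fun a => ?_, rfl⟩
      rw [hz1app, habs1]
      exact ⟨le_min (hz a).1 (h1 a), min_le_right _ _⟩
    have hm2 : ψ z2 ∈ S2 ψ y2 := by
      refine ⟨z2, fun a => ?_, rfl⟩
      rw [hz2app, habs2]
      constructor
      · simp [min_le_left]
      · have hb := (hz a).2
        rw [habs12 a] at hb
        rcases le_total (z a) (y1 a) with h | h
        · rw [min_eq_left h]; simpa using h2 a
        · rw [min_eq_right h]; linarith
    calc ψ z = ψ z1 + ψ z2 := by rw [hzz, map_add]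
      _ ≤ G ψ y1 + G ψ y2 :=
        add_le_add (le_csSup (S2_bdd ψ hN hbd y1) hm1) (le_csSup (S2_bdd ψ hN hbd y2) hm2)
  · -- superadditivity
    have key : ∀ t1 ∈ S2 ψ y1, ∀ t2 ∈ S2 ψ y2, t1 + t2 ≤ G ψ (y1 + y2) := by
      rintro t1 ⟨w1, hw1, rfl⟩ t2 ⟨w2, hw2, rfl⟩
      have hmem : ψ w1 + ψ w2 ∈ S2 ψ (y1 + y2) := by
        refine ⟨w1 + w2, fun a => ?_, (map_add ψ w1 w2).symm⟩
        have e : (w1 + w2) a = w1 a + w2 a := by simp [lp.coeFn_add]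
        rw [e, habs12 a]
        constructor
        · exact add_nonneg (hw1 a).1 (hw2 a).1
        · have b1 := (hw1 a).2; have b2 := (hw2 a).2
          rw [habs1 a] at b1; rw [habs2 a] at b2
          exact add_le_add b1 b2
      exact le_csSup (S2_bdd ψ hN hbd _) hmem
    have step : ∀ t1 ∈ S2 ψ y1, t1 + G ψ y2 ≤ G ψ (y1 + y2) := by
      intro t1 ht1
      have : G ψ y2 ≤ G ψ (y1 + y2) - t1 := by
        apply csSup_le (S2_nonempty ψ y2)
        intro t2 ht2
        linarith [key t1 ht1 t2 ht2]
      linarith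
    have : G ψ y1 ≤ G ψ (y1 + y2) - G ψ y2 := by
      apply csSup_le (S2_nonempty ψ y1)
      intro t1 ht1
      linarith [step t1 ht1]
    linarith

lemma G_select (hN : 0 ≤ N) (hbd : ∀ y : EA A, ‖y‖ ≤ 1 → ψ y ≤ N)
    {ε : ℝ} (hε : 0 < ε) (l : List (EA A)) :
    ∃ z : EA A, (∀ a, 0 ≤ z a ∧ z a ≤ (l.map fun y => |y a|).sum) ∧
      (l.map (G ψ)).sum ≤ ψ z + l.length * ε := by
  induction l with
  | nil =>
      exact ⟨0, fun a => by simp [lp.coeFn_zero], by simp⟩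
  | cons x l ih =>
      obtain ⟨z, hz1, hz2⟩ := ih
      have hlt : G ψ x - ε < sSup (S2 ψ x) := sub_lt_self _ hε
      obtain ⟨t, ht, htlt⟩ := exists_lt_of_lt_csSup (S2_nonempty ψ x) hlt
      obtain ⟨zx, hzx, rfl⟩ := ht
      refine ⟨zx + z, fun a => ?_, ?_⟩
      · have e : (zx + z) a = zx a + z a := by simp [lp.coeFn_add]
        rw [e, List.map_cons, List.sum_cons]
        exact ⟨add_nonneg (hzx a).1 (hz1 a).1, add_le_add (hzx a).2 (hz1 a).2⟩
      · rw [List.map_cons, List.sum_cons, map_add, List.length_cons]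
        push_cast
        have : G ψ x ≤ ψ zx + ε := by linarith
        linarith

/-- the linear functional extending `G ψ` from the positive cone -/
lemma phi_exists (hN : 0 ≤ N) (hbd : ∀ y : EA A, ‖y‖ ≤ 1 → ψ y ≤ N) :
    ∃ φ : EA A →L[ℝ] ℝ, ∀ y : EA A, (∀ a, 0 ≤ y a) → φ y = G ψ y := by
  have maxadd : ∀ r : ℝ, max r 0 = r + max (-r) 0 := fun r => by
    rcases le_total r 0 with h | h
    · rw [max_eq_right h, max_eq_left (by linarith)]; ring
    · rw [max_eq_left h, max_eq_right (by linarith)]; ring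
  have keyadd : ∀ w v : EA A,
      lpPos (w + v) + (lpNeg w + lpNeg v) = lpNeg (w + v) + (lpPos w + lpPos v) := by
    intro w v
    apply lp.ext
    funext a
    show (lpPos (w + v) + (lpNeg w + lpNeg v)) a = (lpNeg (w + v) + (lpPos w + lpPos v)) a
    simp only [lp.coeFn_add, Pi.add_apply, lpPos_apply, lpNeg_apply]
    rw [maxadd (w a + v a), maxadd (w a), maxadd (v a)]
    ring
  have Gaddgen : ∀ u1 u2 u3 : EA A, (∀ a, 0 ≤ u1 a) → (∀ a, 0 ≤ u2 a) → (∀ a, 0 ≤ u3 a) →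
      G ψ (u1 + (u2 + u3)) = G ψ u1 + G ψ u2 + G ψ u3 := by
    intro u1 u2 u3 hu1 hu2 hu3
    rw [G_add ψ hN hbd hu1 (fun a => by
        have e : (u2 + u3) a = u2 a + u3 a := by simp [lp.coeFn_add]
        rw [e]; exact add_nonneg (hu2 a) (hu3 a)),
      G_add ψ hN hbd hu2 hu3]
    ring
  set φf : EA A → ℝ := fun w => G ψ (lpPos w) - G ψ (lpNeg w) with hφf
  have hadd : ∀ w v : EA A, φf (w + v) = φf w + φf v := by
    intro w v
    have h := congrArg (G ψ) (keyadd w v)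
    rw [Gaddgen _ _ _ (lpPos_nonneg _) (lpNeg_nonneg _) (lpNeg_nonneg _),
      Gaddgen _ _ _ (lpNeg_nonneg _) (lpPos_nonneg _) (lpPos_nonneg _)] at h
    simp only [hφf]
    linarith
  have hposSmul : ∀ (c : ℝ), 0 ≤ c → ∀ w : EA A, lpPos (c • w) = c • lpPos w := by
    intro c hc w
    apply lp.ext
    funext a
    show max ((c • w) a) 0 = (c • lpPos w) a
    have e1 : (c • w) a = c * w a := by simp [lp.coeFn_smul]
    have e2 : (c • lpPos w) a = c * max (w a) 0 := by simp [lp.coeFn_smul, lpPos_apply]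
    rw [e1, e2]
    rcases le_total (w a) 0 with h | h
    · rw [max_eq_right h, max_eq_right (by nlinarith), mul_zero]
    · rw [max_eq_left h, max_eq_left (by nlinarith)]
  have hnegSmul : ∀ (c : ℝ), 0 ≤ c → ∀ w : EA A, lpNeg (c • w) = c • lpNeg w := by
    intro c hc w
    show lpPos (-(c • w)) = c • lpPos (-w)
    rw [← smul_neg, hposSmul c hc]
  have hnegneg : ∀ w : EA A, lpPos (-w) = lpNeg w := fun w => rfl
  have hsmul : ∀ (c : ℝ) (w : EA A), φf (c • w) = c * φf w := by
    intro c w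
    rcases le_total 0 c with hc | hc
    · simp only [hφf]
      rw [hposSmul c hc, hnegSmul c hc, G_posHom ψ hN hbd c hc, G_posHom ψ hN hbd c hc]
      ring
    · have hc' : 0 ≤ -c := by linarith
      have e : c • w = (-c) • (-w) := by rw [smul_neg, neg_smul, neg_neg]
      simp only [hφf]
      rw [e, hposSmul _ hc', hnegSmul _ hc', G_posHom ψ hN hbd _ hc', G_posHom ψ hN hbd _ hc']
      have e2 : lpPos (-w) = lpNeg w := rfl
      have e3 : lpNeg (-w) = lpPos w := by
        show lpPos (-(-w)) = lpPos w
        rw [neg_neg]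
      rw [e2, e3]
      ring
  set φlin : EA A →ₗ[ℝ] ℝ :=
    { toFun := φf
      map_add' := hadd
      map_smul' := fun c w => by simpa using hsmul c w } with hφlin
  have hbound : ∀ w : EA A, ‖φlin w‖ ≤ (2 * N) * ‖w‖ := by
    intro w
    have h1 : 0 ≤ G ψ (lpPos w) := G_nonneg ψ hN hbd _
    have h2 : 0 ≤ G ψ (lpNeg w) := G_nonneg ψ hN hbd _
    have h3 : G ψ (lpPos w) ≤ N * ‖w‖ :=
      le_trans (G_le ψ hN hbd _) (mul_le_mul_of_nonneg_left (norm_lpPos_le w) hN)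
    have h4 : G ψ (lpNeg w) ≤ N * ‖w‖ :=
      le_trans (G_le ψ hN hbd _) (mul_le_mul_of_nonneg_left (norm_lpNeg_le w) hN)
    have : |φf w| ≤ 2 * N * ‖w‖ := by
      rw [abs_le]
      constructor <;> simp only [hφf] <;> nlinarith
    simpa [Real.norm_eq_abs, hφlin] using this
  refine ⟨LinearMap.mkContinuous φlin (2 * N) hbound, fun y hy => ?_⟩
  have e1 : lpPos y = y := by
    apply lp.ext
    funext a
    show max (y a) 0 = y a
    exact max_eq_left (hy a)
  have e2 : lpNeg y = 0 := by
    apply lp.ext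
    funext a
    show max (-(y a)) 0 = (0 : EA A) a
    rw [max_eq_right (by linarith [hy a])]
    simp [lp.coeFn_zero]
  show φf y = G ψ y
  simp only [hφf, e1, e2, G_zero]
  ring

end psi

section main

variable {f : EA A → ℝ}

lemma G_ge_f (hf : MaximalA f) (ψ : EA A →L[ℝ] ℝ) {N : ℝ}
    (hN : 0 ≤ N) (hbd : ∀ y : EA A, ‖y‖ ≤ 1 → ψ y ≤ N)
    (hψ2 : ∀ z : EA A, (∀ a, 0 ≤ z a) → 0 < f z → f z ≤ ψ z) (x : EA A) :
    f x ≤ G ψ x := by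
  have h1 : f x ≤ f (lpAbs x) := f_le_f_abs hf x
  rcases le_or_gt (f (lpAbs x)) 0 with h | h
  · exact le_trans (le_trans h1 h) (G_nonneg ψ hN hbd x)
  · have h2 : f (lpAbs x) ≤ ψ (lpAbs x) :=
      hψ2 _ (fun a => by rw [lpAbs_apply]; exact abs_nonneg _) h
    have hmem : ψ (lpAbs x) ∈ S2 ψ x :=
      ⟨lpAbs x, fun a => by rw [lpAbs_apply]; exact ⟨abs_nonneg _, le_refl _⟩, rfl⟩
    exact le_trans (le_trans h1 h2) (le_csSup (S2_bdd ψ hN hbd x) hmem)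

lemma G_norm_le (hFin : fblNormA f < ∞) (ψ : EA A →L[ℝ] ℝ)
    (hbd : ∀ y : EA A, ‖y‖ ≤ 1 → ψ y ≤ (fblNormA f).toReal) :
    fblNormA (G ψ) ≤ fblNormA f := by
  have hN : (0:ℝ) ≤ (fblNormA f).toReal := ENNReal.toReal_nonneg
  conv_rhs => rw [← ENNReal.ofReal_toReal hFin.ne]
  apply fblNorm_le_of
  intro l hl
  rw [sum_map_abs_of_nonneg (G_nonneg ψ hN hbd)]
  apply le_of_forall_pos_le_add
  intro ε' hε'
  set ε : ℝ := ε' / (l.length + 1) with hεdef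
  have hε : 0 < ε := by positivity
  obtain ⟨z, hz1, hz2⟩ := G_select ψ hN hbd hε l
  have hznorm : ‖z‖ ≤ 1 := by
    apply norm_le_of zero_le_one
    intro a
    rw [abs_of_nonneg (hz1 a).1]
    exact le_trans (hz1 a).2 (hl a)
  have hψz := hbd z hznorm
  have key : ((l.length : ℝ) + 1) * ε = ε' := by
    rw [hεdef]; field_simp
  have hlen : (l.length : ℝ) * ε ≤ ε' := by nlinarith [hε.le]
  linarith

lemma G_eq_f (hf : MaximalA f) (ψ : EA A →L[ℝ] ℝ)
    (hbd : ∀ y : EA A, ‖y‖ ≤ 1 → ψ y ≤ (fblNormA f).toReal)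
    (hψ2 : ∀ z : EA A, (∀ a, 0 ≤ z a) → 0 < f z → f z ≤ ψ z) :
    G ψ = f := by
  obtain ⟨hPH, hPos, hFin, hMax⟩ := id hf
  have hN : (0:ℝ) ≤ (fblNormA f).toReal := ENNReal.toReal_nonneg
  have hle : fblNormA (G ψ) ≤ fblNormA f := G_norm_le hFin ψ hbd
  have hge : fblNormA f ≤ fblNormA (G ψ) :=
    fblNorm_mono fun x => by
      rw [abs_of_nonneg (hPos x), abs_of_nonneg (G_nonneg ψ hN hbd x)]
      exact G_ge_f hf ψ hN hbd hψ2 x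
  exact hMax (G ψ) (G_posHom ψ hN hbd) (G_nonneg ψ hN hbd)
    (lt_of_le_of_lt hle hFin) (G_ge_f hf ψ hN hbd hψ2) (le_antisymm hle hge)

end main

end S13

open S13

/-- every maximal element of `H_0[ℓ1(A)]_+` is of the form
`g_φ(x*) = |φ(|x*|)|` for a bounded linear functional `φ` on `ℓ∞(A)`. -/
theorem stmt13 {A : Type*} [Nonempty A] (f : lp (fun _ : A => ℝ) ⊤ → ℝ)
    (hf : MaximalA f) :
    ∃ φ : lp (fun _ : A => ℝ) ⊤ →L[ℝ] ℝ, ∀ x, f x = |φ (lpAbs x)| := by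
  classical
  obtain ⟨hPH, hPos, hFin, hMax⟩ := id hf
  set N : ℝ := (fblNormA f).toReal with hNdef
  have hN0 : (0:ℝ) ≤ N := ENNReal.toReal_nonneg
  by_cases htriv : ∀ z : lp (fun _ : A => ℝ) ⊤, (∀ a, 0 ≤ z a) → f z ≤ 1
  · -- f is identically zero
    have hz : ∀ z : lp (fun _ : A => ℝ) ⊤, (∀ a, 0 ≤ z a) → f z = 0 := by
      intro z hzp
      by_contra h
      have hfz : 0 < f z := lt_of_le_of_ne (hPos z) (Ne.symm h)
      have h2 : f ((2 / f z) • z) = (2 / f z) * f z := hPH _ (by positivity) z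
      have h3 : (2 / f z) * f z = 2 := by field_simp
      have h4 : ∀ a, 0 ≤ ((2 / f z) • z) a := fun a => by
        have e : ((2 / f z) • z) a = (2 / f z) * z a := by simp [lp.coeFn_smul]
        rw [e]
        exact mul_nonneg (by positivity) (hzp a)
      have h5 := htriv _ h4
      rw [h2, h3] at h5
      linarith
    have hzero : ∀ x, f x = 0 := by
      intro x
      have h1 := f_le_f_abs hf x
      have h2 : f (lpAbs x) = 0 := hz _ (fun a => by rw [lpAbs_apply]; exact abs_nonneg _)
      exact le_antisymm (h1.trans h2.le) (hPos x)
    exact ⟨0, fun x => by simp [hzero]⟩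
  · push_neg at htriv
    obtain ⟨z0, hz0p, hz0⟩ := htriv
    have hNpos : 0 < N := by
      by_contra h
      push_neg at h
      have h1 := f_le_N_norm hPH hPos hFin z0
      have h2 : N * ‖z0‖ ≤ 0 := mul_nonpos_of_nonpos_of_nonneg h (norm_nonneg z0)
      rw [← hNdef] at h1
      linarith
    set W : Set (lp (fun _ : A => ℝ) ⊤) := {z | (∀ a, 0 ≤ z a) ∧ 1 < f z} with hWdef
    have hWconv : Convex ℝ W := by
      rintro z1 ⟨hz1p, hz1f⟩ z2 ⟨hz2p, hz2f⟩ a b ha hb hab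
      constructor
      · intro c
        have e : (a • z1 + b • z2) c = a * z1 c + b * z2 c := by
          simp [lp.coeFn_add, lp.coeFn_smul]
          rfl
        rw [e]
        exact add_nonneg (mul_nonneg ha (hz1p c)) (mul_nonneg hb (hz2p c))
      · rcases ha.eq_or_lt with rfl | ha'
        · have hb1 : b = 1 := by linarith
          rw [hb1, one_smul, zero_smul, zero_add]
          exact hz2f
        · rcases hb.eq_or_lt with rfl | hb'
          · have ha1 : a = 1 := by linarith
            rw [ha1, one_smul, zero_smul, add_zero]
            exact hz1f
          · have hp1 : ∀ c, 0 ≤ (a • z1) c := fun c => by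
              have e : (a • z1) c = a * z1 c := by simp [lp.coeFn_smul]
              rw [e]; exact mul_nonneg ha (hz1p c)
            have hp2 : ∀ c, 0 ≤ (b • z2) c := fun c => by
              have e : (b • z2) c = b * z2 c := by simp [lp.coeFn_smul]
              rw [e]; exact mul_nonneg hb (hz2p c)
            have hsup := f_superadd hf hp1 hp2
            have e1 : f (a • z1) = a * f z1 := hPH a ha z1
            have e2 : f (b • z2) = b * f z2 := hPH b hb z2
            rw [e1, e2] at hsup
            nlinarith
    have hdisj : Disjoint (Metric.ball (0 : lp (fun _ : A => ℝ) ⊤) N⁻¹) W := by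
      rw [Set.disjoint_left]
      rintro z hzb ⟨hzp, hzf⟩
      rw [Metric.mem_ball, dist_zero_right] at hzb
      have h1 : f z ≤ N * ‖z‖ := by
        have := f_le_N_norm hPH hPos hFin z
        rwa [← hNdef] at this
      have h2 : N * ‖z‖ < N * N⁻¹ := mul_lt_mul_of_pos_left hzb hNpos
      rw [mul_inv_cancel₀ hNpos.ne'] at h2
      linarith
    obtain ⟨φ0, u, hs1, hs2⟩ :=
      geometric_hahn_banach_open (convex_ball (0 : lp (fun _ : A => ℝ) ⊤) N⁻¹)
        Metric.isOpen_ball hWconv hdisj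
    have hu : 0 < u := by
      have h := hs1 0 (Metric.mem_ball_self (inv_pos.mpr hNpos))
      simpa using h
    set ψ : lp (fun _ : A => ℝ) ⊤ →L[ℝ] ℝ := u⁻¹ • φ0 with hψdef
    have hψapp : ∀ y, ψ y = u⁻¹ * φ0 y := fun y => by
      rw [hψdef]; simp
    have hbd : ∀ y : lp (fun _ : A => ℝ) ⊤, ‖y‖ ≤ 1 → ψ y ≤ N := by
      intro y hy
      by_contra hcon
      push_neg at hcon
      have hψy : 0 < ψ y := lt_of_le_of_lt hN0 hcon
      have hball : (ψ y)⁻¹ • y ∈ Metric.ball (0 : lp (fun _ : A => ℝ) ⊤) N⁻¹ := by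
        rw [Metric.mem_ball, dist_zero_right, norm_smul, Real.norm_eq_abs,
          abs_of_nonneg (inv_nonneg.mpr hψy.le)]
        have hlt : (ψ y)⁻¹ < N⁻¹ := by
          rw [inv_eq_one_div, inv_eq_one_div]
          exact one_div_lt_one_div_of_lt hNpos hcon
        calc (ψ y)⁻¹ * ‖y‖ ≤ (ψ y)⁻¹ * 1 :=
              mul_le_mul_of_nonneg_left hy (inv_nonneg.mpr hψy.le)
          _ = (ψ y)⁻¹ := mul_one _
          _ < N⁻¹ := hlt
      have h1 := hs1 _ hball
      have h2 : ψ ((ψ y)⁻¹ • y) < 1 := by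
        rw [hψapp]
        calc u⁻¹ * φ0 ((ψ y)⁻¹ • y) < u⁻¹ * u :=
              mul_lt_mul_of_pos_left h1 (inv_pos.mpr hu)
          _ = 1 := inv_mul_cancel₀ hu.ne'
      rw [map_smul, smul_eq_mul, inv_mul_cancel₀ hψy.ne'] at h2
      linarith
    have hψ2 : ∀ z : lp (fun _ : A => ℝ) ⊤, (∀ a, 0 ≤ z a) → 0 < f z → f z ≤ ψ z := by
      intro z hzp hfz
      by_contra hcon
      push_neg at hcon
      obtain ⟨t, ht1, ht2⟩ := exists_between (show max 0 (ψ z) < f z from max_lt hfz hcon)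
      have ht0 : 0 < t := lt_of_le_of_lt (le_max_left _ _) ht1
      have htψ : ψ z < t := lt_of_le_of_lt (le_max_right _ _) ht1
      have hmem : t⁻¹ • z ∈ W := by
        constructor
        · intro a
          have e : (t⁻¹ • z) a = t⁻¹ * z a := by simp [lp.coeFn_smul]
          rw [e]
          exact mul_nonneg (inv_nonneg.mpr ht0.le) (hzp a)
        · have e : f (t⁻¹ • z) = t⁻¹ * f z := hPH _ (inv_nonneg.mpr ht0.le) z
          rw [e]
          rw [show (1:ℝ) = t⁻¹ * t by rw [inv_mul_cancel₀ ht0.ne']]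
          exact mul_lt_mul_of_pos_left ht2 (inv_pos.mpr ht0)
      have h1 := hs2 _ hmem
      have h2 : 1 ≤ ψ (t⁻¹ • z) := by
        rw [hψapp]
        calc (1:ℝ) = u⁻¹ * u := (inv_mul_cancel₀ hu.ne').symm
          _ ≤ u⁻¹ * φ0 (t⁻¹ • z) := mul_le_mul_of_nonneg_left h1 (inv_nonneg.mpr hu.le)
      rw [map_smul, smul_eq_mul] at h2
      have h3 : t ≤ ψ z := by
        have := mul_le_mul_of_nonneg_left h2 ht0.le
        rw [mul_one, ← mul_assoc, mul_inv_cancel₀ ht0.ne', one_mul] at this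
        exact this
      linarith
    have hbd' : ∀ y : lp (fun _ : A => ℝ) ⊤, ‖y‖ ≤ 1 → ψ y ≤ (fblNormA f).toReal := by
      intro y hy
      rw [← hNdef]
      exact hbd y hy
    have hGf := G_eq_f hf ψ hbd' hψ2
    obtain ⟨φ, hφ⟩ := phi_exists ψ hN0 hbd
    refine ⟨φ, fun x => ?_⟩
    have h1 : φ (lpAbs x) = G ψ (lpAbs x) :=
      hφ _ (fun a => by rw [lpAbs_apply]; exact abs_nonneg _)
    have h2 : G ψ (lpAbs x) = G ψ x := G_abs ψ x
    have h3 : G ψ x = f x := congrFun hGf x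
    rw [h1, h2, h3, abs_of_nonneg (hPos x)]
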